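/- The multiplicity of the trivial SL(2,ℂ)-representation M₁ in (ℂ²)^{⊗(2k)} (diagonal action) equals the k-th Catalan number C_k = (1/(k+1))·binom(2k,k). -/

import Mathlib

open Matrix TensorProduct

abbrev SL2 : Type := Matrix.SpecialLinearGroup (Fin 2) ℂ

/-- The tensor power `(ℂ²)^{⊗N}` realized as functions on multi-indices. -/
abbrev TP (N : ℕ) : Type := (Fin N → Fin 2) → ℂ

/-- The symmetric group `S_N` acting on `(ℂ²)^{⊗N}` by permuting tensor factors. -/
noncomputable def permRep (N : ℕ) : Representation ℂ (Equiv.Perm (Fin N)) (TP N) where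
  toFun σ := LinearMap.funLeft ℂ ℂ (fun x => x ∘ σ)
  map_one' := by ext f x; rfl
  map_mul' := by intro σ τ; rfl

/-- The Kronecker `N`-th power of a `2×2` matrix. -/
noncomputable def kronPow (N : ℕ) (g : Matrix (Fin 2) (Fin 2) ℂ) :
    Matrix (Fin N → Fin 2) (Fin N → Fin 2) ℂ :=
  Matrix.of fun x y => ∏ i, g (x i) (y i)

/-- The diagonal action of `SL(2,ℂ)` on `(ℂ²)^{⊗N}`. -/
noncomputable def sl2Rep (N : ℕ) : Representation ℂ SL2 (TP N) where
  toFun g := Matrix.toLin' (kronPow N (g : Matrix (Fin 2) (Fin 2) ℂ))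
  map_one' := by
    show Matrix.toLin' (kronPow N ((1 : SL2) : Matrix (Fin 2) (Fin 2) ℂ)) = 1
    have : kronPow N ((1 : SL2) : Matrix (Fin 2) (Fin 2) ℂ) = 1 := by
      ext x y
      by_cases h : x = y
      · subst h; simp [kronPow, Matrix.one_apply]
      · obtain ⟨i, hi⟩ := Function.ne_iff.mp h
        simp only [kronPow, Matrix.one_apply, Matrix.of_apply]
        rw [if_neg h, Finset.prod_eq_zero (Finset.mem_univ i)]
        simp [Matrix.one_apply, hi]
    rw [this]
    ext f x
    simp [Matrix.toLin'_one]
  map_mul' := by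
    intro g h
    show Matrix.toLin' (kronPow N ((g * h : SL2) : Matrix (Fin 2) (Fin 2) ℂ)) = _
    have : kronPow N ((g * h : SL2) : Matrix (Fin 2) (Fin 2) ℂ)
        = kronPow N g * kronPow N h := by
      ext x y
      simp only [kronPow, Matrix.of_apply, Matrix.mul_apply,
        Matrix.SpecialLinearGroup.coe_mul]
      rw [Finset.prod_univ_sum, Fintype.piFinset_univ]
      exact Finset.sum_congr rfl fun z _ => Finset.prod_mul_distrib
    rw [this]
    exact Matrix.toLin'_mul _ _
  
def IsIrreducibleRep {G V : Type*} [Monoid G] [AddCommGroup V] [Module ℂ V]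
    (ρ : Representation ℂ G V) : Prop :=
  (∃ v : V, v ≠ 0) ∧
    ∀ p : Submodule ℂ V, (∀ g : G, ∀ v ∈ p, ρ g v ∈ p) → p = ⊥ ∨ p = ⊤

/-- The submodule of invariant vectors of a representation. -/
def repInvariants {G V : Type*} [Monoid G] [AddCommGroup V] [Module ℂ V]
    (ρ : Representation ℂ G V) : Submodule ℂ V where
  carrier := {v | ∀ g, ρ g v = v}
  add_mem' := by intro a b ha hb g; rw [map_add, ha g, hb g]
  zero_mem' := by intro g; simp
  smul_mem' := by intro c v hv g; rw [_root_.map_smul, hv g]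

namespace CatalanAux

open Finset Function

variable {N : ℕ}

/-! ### Basic `Fin 2` facts -/

lemma fin2_cases (a : Fin 2) : a = 0 ∨ a = 1 := by
  rcases a with ⟨n, hn⟩
  interval_cases n
  · exact Or.inl rfl
  · exact Or.inr rfl

lemma fin2_zero_ne_one : (0 : Fin 2) ≠ 1 := by decide
lemma fin2_one_ne_zero : (1 : Fin 2) ≠ 0 := by decide
lemma fin2_le_one (a : Fin 2) : a ≤ 1 := by rw [Fin.le_def]; omega
lemma fin2_zero_le (a : Fin 2) : 0 ≤ a := by rw [Fin.le_def]; omega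

lemma fin2_ne_zero {a : Fin 2} (h : a ≠ 0) : a = 1 := (fin2_cases a).resolve_left h
lemma fin2_ne_one {a : Fin 2} (h : a ≠ 1) : a = 0 := (fin2_cases a).resolve_right h

/-! ### Counting zeros and ones -/

def ones (x : Fin N → Fin 2) : ℕ := (univ.filter fun i => x i = 1).card
def zeros (x : Fin N → Fin 2) : ℕ := (univ.filter fun i => x i = 0).card

lemma filter_ne_zero_eq (x : Fin N → Fin 2) :
    (univ.filter fun i => ¬ x i = 0) = (univ.filter fun i => x i = 1) := by
  apply filter_congr
  intro i _
  rcases fin2_cases (x i) with h | h <;> simp [h, fin2_one_ne_zero]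

lemma zeros_add_ones (x : Fin N → Fin 2) : zeros x + ones x = N := by
  have h := Finset.card_filter_add_card_filter_not
    (s := (univ : Finset (Fin N))) (p := fun i => x i = 0)
  rw [filter_ne_zero_eq] at h
  simpa [zeros, ones] using h

/-! ### Filter/update lemmas -/

lemma filter1_update_one (x : Fin N → Fin 2) (i : Fin N) (h : x i = 0) :
    (univ.filter fun j => Function.update x i 1 j = 1)
      = insert i (univ.filter fun j => x j = 1) := by
  ext j
  rcases eq_or_ne j i with rfl | hj
  · simp [Function.update_self]
  · simp [Function.update_of_ne hj, hj]

lemma filter0_update_zero (x : Fin N → Fin 2) (i : Fin N) (h : x i = 1) :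
    (univ.filter fun j => Function.update x i 0 j = 0)
      = insert i (univ.filter fun j => x j = 0) := by
  ext j
  rcases eq_or_ne j i with rfl | hj
  · simp [Function.update_self]
  · simp [Function.update_of_ne hj, hj]

lemma filter1_update_zero (x : Fin N → Fin 2) (i : Fin N) (h : x i = 1) :
    (univ.filter fun j => Function.update x i 0 j = 1)
      = (univ.filter fun j => x j = 1).erase i := by
  ext j
  rcases eq_or_ne j i with rfl | hj
  · simp [Function.update_self, fin2_zero_ne_one]
  · simp [Function.update_of_ne hj, hj]

lemma ones_update_one {x : Fin N → Fin 2} {i : Fin N} (h : x i = 0) :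
    ones (Function.update x i 1) = ones x + 1 := by
  rw [ones, filter1_update_one x i h, card_insert_of_notMem (by simp [h, fin2_zero_ne_one])]
  rfl

lemma ones_update_zero {x : Fin N → Fin 2} {i : Fin N} (h : x i = 1) :
    ones (Function.update x i 0) + 1 = ones x := by
  rw [ones, ones, filter1_update_zero x i h]
  exact Finset.card_erase_add_one (by simp [h])

lemma update_one_self {x : Fin N → Fin 2} {i : Fin N} (h : x i = 0) :
    Function.update x i 0 = x := by
  rw [← h]; exact Function.update_eq_self i x

lemma update_zero_self {x : Fin N → Fin 2} {i : Fin N} (h : x i = 1) :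
    Function.update x i 1 = x := by
  rw [← h]; exact Function.update_eq_self i x

/-! ### The operators E, F and the weight submodules -/

noncomputable def Eop (N : ℕ) : TP N →ₗ[ℂ] TP N where
  toFun v := fun x => ∑ i ∈ univ.filter (fun i => x i = 0), v (Function.update x i 1)
  map_add' v w := by
    funext x
    simpa using Finset.sum_add_distrib
  map_smul' c v := by
    funext x
    simpa using (Finset.mul_sum _ _ _).symm

noncomputable def Fop (N : ℕ) : TP N →ₗ[ℂ] TP N where
  toFun v := fun x => ∑ i ∈ univ.filter (fun i => x i = 1), v (Function.update x i 0)
  map_add' v w := by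
    funext x
    simpa using Finset.sum_add_distrib
  map_smul' c v := by
    funext x
    simpa using (Finset.mul_sum _ _ _).symm

lemma Eop_apply (v : TP N) (x : Fin N → Fin 2) :
    Eop N v x = ∑ i ∈ univ.filter (fun i => x i = 0), v (Function.update x i 1) := rfl

lemma Fop_apply (v : TP N) (x : Fin N → Fin 2) :
    Fop N v x = ∑ i ∈ univ.filter (fun i => x i = 1), v (Function.update x i 0) := rfl

noncomputable def W (N ℓ : ℕ) : Submodule ℂ (TP N) where
  carrier := {v | ∀ x, ones x ≠ ℓ → v x = 0}
  add_mem' := by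
    intro a b ha hb x hx
    have := ha x hx
    have := hb x hx
    simp_all
  zero_mem' := by intro x _; rfl
  smul_mem' := by
    intro c v hv x hx
    have := hv x hx
    simp_all

lemma mem_W_iff {v : TP N} {ℓ : ℕ} : v ∈ W N ℓ ↔ ∀ x, ones x ≠ ℓ → v x = 0 := Iff.rfl

lemma Eop_mem_W {v : TP N} {ℓ : ℕ} (hv : v ∈ W N (ℓ+1)) : Eop N v ∈ W N ℓ := by
  intro x hx
  rw [Eop_apply]
  apply Finset.sum_eq_zero
  intro i hi
  rw [mem_filter] at hi
  apply hv
  rw [ones_update_one hi.2]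
  omega

lemma Fop_mem_W {v : TP N} {ℓ : ℕ} (hv : v ∈ W N ℓ) : Fop N v ∈ W N (ℓ+1) := by
  intro x hx
  rw [Fop_apply]
  apply Finset.sum_eq_zero
  intro i hi
  rw [mem_filter] at hi
  apply hv
  have := ones_update_zero hi.2
  omega

/-! ### The commutator relation -/

lemma EF_sub_FE (v : TP N) (x : Fin N → Fin 2) :
    Eop N (Fop N v) x = Fop N (Eop N v) x + ((zeros x : ℂ) - (ones x : ℂ)) * v x := by
  have hL : ∀ i ∈ univ.filter (fun i => x i = 0),
      Fop N v (Function.update x i 1)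
        = v x + ∑ j ∈ univ.filter (fun j => x j = 1),
            v (Function.update (Function.update x i 1) j 0) := by
    intro i hi
    rw [mem_filter] at hi
    rw [Fop_apply, filter1_update_one x i hi.2,
      Finset.sum_insert (by simp [hi.2, fin2_zero_ne_one])]
    congr 1
    rw [Function.update_idem, update_one_self hi.2]
  have hR : ∀ j ∈ univ.filter (fun j => x j = 1),
      Eop N v (Function.update x j 0)
        = v x + ∑ i ∈ univ.filter (fun i => x i = 0),
            v (Function.update (Function.update x j 0) i 1) := by
    intro j hj
    rw [mem_filter] at hj
    rw [Eop_apply, filter0_update_zero x j hj.2,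
      Finset.sum_insert (by simp [hj.2, fin2_one_ne_zero])]
    congr 1
    rw [Function.update_idem, update_zero_self hj.2]
  rw [Eop_apply (Fop N v) x, Finset.sum_congr rfl hL, Finset.sum_add_distrib,
    Fop_apply (Eop N v) x, Finset.sum_congr rfl hR, Finset.sum_add_distrib,
    Finset.sum_const, Finset.sum_const]
  have hswap :
      (∑ i ∈ univ.filter (fun i => x i = 0), ∑ j ∈ univ.filter (fun j => x j = 1),
        v (Function.update (Function.update x i 1) j 0))
      = ∑ j ∈ univ.filter (fun j => x j = 1), ∑ i ∈ univ.filter (fun i => x i = 0),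
        v (Function.update (Function.update x j 0) i 1) := by
    rw [Finset.sum_comm]
    apply Finset.sum_congr rfl
    intro j hj
    apply Finset.sum_congr rfl
    intro i hi
    rw [mem_filter] at hi hj
    have hij : i ≠ j := by
      intro h
      rw [h, hj.2] at hi
      exact fin2_one_ne_zero hi.2
    rw [Function.update_comm hij]
  rw [hswap]
  have h0 : ((univ.filter fun i => x i = 0).card : ℕ) = zeros x := rfl
  have h1 : ((univ.filter fun j => x j = 1).card : ℕ) = ones x := rfl
  rw [h0, h1]
  push_cast
  ring

/-! ### The inner product -/

noncomputable def ip (v w : TP N) : ℂ := ∑ x, v x * (starRingEnd ℂ) (w x)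

lemma ip_conj (v w : TP N) : ip v w = (starRingEnd ℂ) (ip w v) := by
  rw [ip, ip, map_sum]
  apply Finset.sum_congr rfl
  intro x _
  simp only [_root_.map_mul, Complex.conj_conj]
  ring

lemma ip_Eop (v w : TP N) : ip (Eop N v) w = ip v (Fop N w) := by
  rw [ip, ip]
  simp only [Eop_apply, Fop_apply, Finset.sum_mul, map_sum, Finset.mul_sum]
  rw [Finset.sum_sigma' (f := fun x i => v (Function.update x i 1) * (starRingEnd ℂ) (w x)), Finset.sum_sigma' (f := fun x i => v x * (starRingEnd ℂ) (w (Function.update x i 0)))]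
  refine Finset.sum_nbij' (fun p => ⟨Function.update p.1 p.2 1, p.2⟩)
    (fun p => ⟨Function.update p.1 p.2 0, p.2⟩) ?_ ?_ ?_ ?_ ?_
  · rintro ⟨x, i⟩ hp
    simp only [Finset.mem_sigma, mem_filter, mem_univ, true_and] at hp ⊢
    simp [Function.update_self]
  · rintro ⟨y, j⟩ hp
    simp only [Finset.mem_sigma, mem_filter, mem_univ, true_and] at hp ⊢
    simp [Function.update_self]
  · rintro ⟨x, i⟩ hp
    simp only [Finset.mem_sigma, mem_filter, mem_univ, true_and] at hp
    simp only [Sigma.mk.inj_iff, heq_eq_eq, and_true]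
    rw [Function.update_idem, update_one_self hp]
  · rintro ⟨y, j⟩ hp
    simp only [Finset.mem_sigma, mem_filter, mem_univ, true_and] at hp
    simp only [Sigma.mk.inj_iff, heq_eq_eq, and_true]
    rw [Function.update_idem, update_zero_self hp]
  · rintro ⟨x, i⟩ hp
    simp only [Finset.mem_sigma, mem_filter, mem_univ, true_and] at hp
    simp only []
    rw [Function.update_idem, update_one_self hp]

lemma ip_Fop (v w : TP N) : ip (Fop N v) w = ip v (Eop N w) := by
  rw [ip_conj, ← ip_Eop, ← ip_conj]

lemma ip_self (v : TP N) : ip v v = ((∑ x, Complex.normSq (v x) : ℝ) : ℂ) := by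
  rw [ip]
  push_cast
  exact Finset.sum_congr rfl fun x _ => Complex.mul_conj (v x)

lemma eq_zero_of_sum_normSq {v : TP N} (h : (∑ x, Complex.normSq (v x)) = 0) : v = 0 := by
  funext x
  have := (Finset.sum_eq_zero_iff_of_nonneg
    (fun y _ => Complex.normSq_nonneg (v y))).mp h x (Finset.mem_univ x)
  exact Complex.normSq_eq_zero.mp this

/-! ### The master inequality identity -/

lemma master {v : TP N} {ℓ : ℕ} (hv : v ∈ W N ℓ) (hl : ℓ ≤ N) :
    (∑ x, Complex.normSq (Fop N v x) : ℝ)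
      = (∑ x, Complex.normSq (Eop N v x)) + ((N : ℝ) - 2 * ℓ) * ∑ x, Complex.normSq (v x) := by
  have h1 : ip (Fop N v) (Fop N v) = ip v (Eop N (Fop N v)) := ip_Fop v (Fop N v)
  have h2 : ip v (Eop N (Fop N v))
      = ip v (Fop N (Eop N v)) + ∑ x, ((zeros x : ℂ) - (ones x : ℂ)) * Complex.normSq (v x) := by
    rw [ip, ip, ← Finset.sum_add_distrib]
    apply Finset.sum_congr rfl
    intro x _
    rw [EF_sub_FE v x, map_add, mul_add]
    congr 1
    rw [_root_.map_mul]
    have hc : (starRingEnd ℂ) ((zeros x : ℂ) - (ones x : ℂ)) = (zeros x : ℂ) - (ones x : ℂ) := by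
      simp
    rw [hc]
    rw [show v x * (((zeros x : ℂ) - (ones x : ℂ)) * (starRingEnd ℂ) (v x))
        = ((zeros x : ℂ) - (ones x : ℂ)) * (v x * (starRingEnd ℂ) (v x)) by ring,
      Complex.mul_conj]
  have h3 : ip v (Fop N (Eop N v)) = ip (Eop N v) (Eop N v) := (ip_Eop v (Eop N v)).symm
  have h4 : (∑ x, ((zeros x : ℂ) - (ones x : ℂ)) * Complex.normSq (v x))
      = (((N : ℝ) - 2 * ℓ) * ∑ x, Complex.normSq (v x) : ℝ) := by
    push_cast
    rw [Finset.mul_sum]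
    apply Finset.sum_congr rfl
    intro x _
    by_cases h : ones x = ℓ
    · have hz : zeros x = N - ℓ := by have := zeros_add_ones x; omega
      rw [h, hz]
      have : ((N - ℓ : ℕ) : ℂ) = (N : ℂ) - (ℓ : ℂ) := by
        have := Nat.cast_sub (R := ℂ) hl
        exact this
      rw [this]
      ring
    · rw [hv x h]
      simp
  rw [ip_self, h2, h3, ip_self, h4] at h1
  exact_mod_cast h1

/-! ### Injectivity consequences -/

lemma eq_zero_of_Eop_high {v : TP N} {ℓ : ℕ} (hv : v ∈ W N ℓ)
    (hN : 2 * ℓ = N + 2) (hE : Eop N v = 0) : v = 0 := by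
  by_cases hl : ℓ ≤ N
  · have hm := master hv hl
    rw [hE] at hm
    have hc : (N : ℝ) - 2 * ℓ = -2 := by
      have : (2 * ℓ : ℝ) = (N : ℝ) + 2 := by exact_mod_cast hN
      linarith
    rw [hc] at hm
    have hz : (∑ x, Complex.normSq ((0 : TP N) x)) = 0 := by simp
    rw [hz, zero_add] at hm
    have hF : (0:ℝ) ≤ ∑ x, Complex.normSq (Fop N v x) :=
      Finset.sum_nonneg fun x _ => Complex.normSq_nonneg _
    have hC : (0:ℝ) ≤ ∑ x, Complex.normSq (v x) :=
      Finset.sum_nonneg fun x _ => Complex.normSq_nonneg _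
    apply eq_zero_of_sum_normSq
    linarith
  · -- ℓ > N : every x has ones x ≤ N < ℓ, so v = 0 directly
    funext x
    apply hv
    have : ones x ≤ N := by
      have := zeros_add_ones x; omega
    omega

lemma eq_zero_of_EopFop_low {v : TP N} {ℓ : ℕ} (hv : v ∈ W N ℓ)
    (hN : N = 2 * ℓ + 2) (hEF : Eop N (Fop N v) = 0) : v = 0 := by
  have h1 : ip (Fop N v) (Fop N v) = 0 := by
    rw [ip_Fop, hEF]
    simp [ip]
  rw [ip_self] at h1
  have hF : Fop N v = 0 := by
    apply eq_zero_of_sum_normSq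
    exact_mod_cast h1
  have hm := master hv (by omega)
  rw [hF] at hm
  have hz : (∑ x, Complex.normSq ((0 : TP N) x)) = 0 := by simp
  rw [hz] at hm
  have hc : (N : ℝ) - 2 * ℓ = 2 := by
    have : (N : ℝ) = 2 * (ℓ : ℝ) + 2 := by exact_mod_cast hN
    linarith
  rw [hc] at hm
  have hE : (0:ℝ) ≤ ∑ x, Complex.normSq (Eop N v x) :=
    Finset.sum_nonneg fun x _ => Complex.normSq_nonneg _
  have hC : (0:ℝ) ≤ ∑ x, Complex.normSq (v x) :=
    Finset.sum_nonneg fun x _ => Complex.normSq_nonneg _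
  apply eq_zero_of_sum_normSq
  linarith

lemma Fop_eq_zero {v : TP N} {ℓ : ℕ} (hv : v ∈ W N ℓ) (hN : N = 2 * ℓ)
    (hE : Eop N v = 0) : Fop N v = 0 := by
  apply eq_zero_of_Eop_high (Fop_mem_W hv) (by omega)
  funext x
  rw [EF_sub_FE v x, hE]
  have h0 : Fop N (0 : TP N) x = 0 := by rw [map_zero]; rfl
  rw [h0, zero_add]
  by_cases h : ones x = ℓ
  · have hz : zeros x = ℓ := by have := zeros_add_ones x; omega
    rw [h, hz]
    simp
  · rw [hv x h]
    simp

/-! ### Surjectivity of E from level ℓ+1 onto level ℓ -/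

lemma map_Eop_W (j : ℕ) (hN : N = 2 * j + 2) :
    Submodule.map (Eop N) (W N (j+1)) = W N j := by
  apply le_antisymm
  · rintro _ ⟨v, hv, rfl⟩
    exact Eop_mem_W hv
  · intro u hu
    have hmaps : ∀ v ∈ W N j, ((Eop N).comp (Fop N)) v ∈ W N j := by
      intro v hv
      exact Eop_mem_W (Fop_mem_W hv)
    set T : W N j →ₗ[ℂ] W N j := ((Eop N).comp (Fop N)).restrict hmaps with hT
    have hinj : Function.Injective T := by
      rw [← LinearMap.ker_eq_bot]
      rw [eq_bot_iff]
      rintro ⟨v, hv⟩ hker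
      rw [LinearMap.mem_ker] at hker
      have hval : Eop N (Fop N v) = 0 := congrArg Subtype.val hker
      have : v = 0 := eq_zero_of_EopFop_low hv hN hval
      simp [Submodule.mem_bot, Subtype.ext_iff, this]
    have hsurj := LinearMap.injective_iff_surjective.mp hinj
    obtain ⟨⟨v, hv⟩, hveq⟩ := hsurj ⟨u, hu⟩
    refine ⟨Fop N v, Fop_mem_W hv, ?_⟩
    exact congrArg Subtype.val hveq


/-! ### Graded raising operators Em -/

def dd (x y : Fin N → Fin 2) : ℕ := (univ.filter fun i => x i ≠ y i).card

def leF (x y : Fin N → Fin 2) : Prop := ∀ i, x i ≤ y i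

instance (x y : Fin N → Fin 2) : Decidable (leF x y) :=
  inferInstanceAs (Decidable (∀ i, x i ≤ y i))

lemma dd_le (x y : Fin N → Fin 2) : dd x y ≤ N := by
  have := Finset.card_filter_le (univ : Finset (Fin N)) (fun i => x i ≠ y i)
  simpa [dd] using this

noncomputable def Em (N m : ℕ) : TP N →ₗ[ℂ] TP N where
  toFun v := fun x => ∑ y ∈ univ.filter (fun y => leF x y ∧ dd x y = m), v y
  map_add' v w := by
    funext x
    simpa using Finset.sum_add_distrib
  map_smul' c v := by
    funext x
    simpa using (Finset.mul_sum _ _ _).symm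

lemma Em_apply (m : ℕ) (v : TP N) (x : Fin N → Fin 2) :
    Em N m v x = ∑ y ∈ univ.filter (fun y => leF x y ∧ dd x y = m), v y := rfl

lemma Em_zero (v : TP N) (x : Fin N → Fin 2) : Em N 0 v x = v x := by
  rw [Em_apply]
  rw [show (univ.filter fun y => leF x y ∧ dd x y = 0) = {x} from ?_]
  · exact Finset.sum_singleton _ _
  · ext y
    simp only [mem_filter, mem_univ, true_and, mem_singleton]
    constructor
    · rintro ⟨h1, h2⟩
      rw [dd, Finset.card_eq_zero] at h2
      funext i
      by_contra hne
      have hmem : i ∈ (univ.filter fun i => x i ≠ y i) := by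
        simp only [mem_filter, mem_univ, true_and]
        exact fun h => hne h.symm
      rw [h2] at hmem
      exact absurd hmem (Finset.notMem_empty i)
    · rintro rfl
      exact ⟨fun i => le_refl _, by simp [dd]⟩

lemma Em_one (v : TP N) (x : Fin N → Fin 2) : Em N 1 v x = Eop N v x := by
  rw [Em_apply, Eop_apply]
  rw [show (univ.filter fun y => leF x y ∧ dd x y = 1)
      = (univ.filter fun i => x i = 0).image (fun i => Function.update x i 1) from ?_]
  · rw [Finset.sum_image]
    intro i hi j hj hij
    rw [Finset.mem_coe, mem_filter] at hi hj
    by_contra hne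
    have h := congrFun hij i
    simp only [] at h
    rw [Function.update_self, Function.update_of_ne hne 1 x, hi.2] at h
    exact fin2_one_ne_zero h
  · ext y
    simp only [mem_filter, mem_univ, true_and, mem_image]
    constructor
    · rintro ⟨h1, h2⟩
      obtain ⟨i, hi⟩ := Finset.card_eq_one.mp h2
      have hmem : ∀ j, x j ≠ y j ↔ j = i := by
        intro j
        constructor
        · intro hj
          have : j ∈ (univ.filter fun j => x j ≠ y j) := by simp [hj]
          rw [hi] at this
          simpa using this
        · rintro rfl
          have : j ∈ ({j} : Finset (Fin N)) := mem_singleton_self j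
          rw [← hi] at this
          simpa using this
      have hxi : x i ≠ y i := (hmem i).mpr rfl
      have hyi : x i = 0 ∧ y i = 1 := by
        rcases fin2_cases (x i) with h | h
        · refine ⟨h, ?_⟩
          rcases fin2_cases (y i) with g | g
          · exact absurd (h.trans g.symm) hxi
          · exact g
        · exfalso
          have hle := h1 i
          rw [h] at hle
          have hy : y i = 1 := le_antisymm (fin2_le_one _) hle
          exact hxi (h.trans hy.symm)
      refine ⟨i, by simp [hyi.1], ?_⟩
      funext j
      rcases eq_or_ne j i with rfl | hj
      · rw [Function.update_self, hyi.2]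
      · rw [Function.update_of_ne hj]
        by_contra hne
        exact hj ((hmem j).mp hne)
    · rintro ⟨i, hi, rfl⟩
      constructor
      · intro j
        rcases eq_or_ne j i with rfl | hj
        · rw [Function.update_self]
          exact fin2_le_one _
        · rw [Function.update_of_ne hj]
      · rw [dd]
        rw [show (univ.filter fun j => x j ≠ Function.update x i 1 j) = {i} from ?_]
        · simp
        · ext j
          rcases eq_or_ne j i with rfl | hj
          · simp [Function.update_self, hi, fin2_zero_ne_one]
          · simp [Function.update_of_ne hj, hj]

lemma Eop_Em (m : ℕ) (v : TP N) (x : Fin N → Fin 2) :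
    Eop N (Em N m v) x = ((m : ℂ) + 1) * Em N (m+1) v x := by
  rw [Eop_apply]
  have key : ∀ i ∈ univ.filter (fun i => x i = 0),
      Em N m v (Function.update x i 1)
        = ∑ y, if leF (Function.update x i 1) y ∧ dd (Function.update x i 1) y = m
            then v y else 0 := by
    intro i _
    rw [Em_apply, Finset.sum_filter]
  rw [Finset.sum_congr rfl key, Finset.sum_comm]
  have count : ∀ y : Fin N → Fin 2,
      (∑ i ∈ univ.filter (fun i => x i = 0),
        if leF (Function.update x i 1) y ∧ dd (Function.update x i 1) y = m then v y else 0)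
      = if leF x y ∧ dd x y = m + 1 then ((m : ℂ) + 1) * v y else 0 := by
    intro y
    rw [← Finset.sum_filter, Finset.sum_const, nsmul_eq_mul]
    by_cases h : leF x y ∧ dd x y = m + 1
    · rw [if_pos h]
      have hset : ((univ.filter fun i => x i = 0).filter
            (fun i => leF (Function.update x i 1) y ∧ dd (Function.update x i 1) y = m))
          = univ.filter (fun i => x i ≠ y i) := by
        ext i
        simp only [Finset.mem_filter, mem_univ, true_and]
        constructor
        · rintro ⟨h0, hle, _⟩
          have h1 := hle i
          rw [Function.update_self] at h1
          have hy1 : y i = 1 := le_antisymm (fin2_le_one _) h1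
          rw [h0, hy1]
          exact fin2_zero_ne_one
        · intro hne
          have h0 : x i = 0 := by
            rcases fin2_cases (x i) with h0 | h1
            · exact h0
            · exfalso
              have := h.1 i
              rw [h1] at this
              have hy1 : y i = 1 := le_antisymm (fin2_le_one _) this
              exact hne (h1.trans hy1.symm)
          have hy1 : y i = 1 := by
            rcases fin2_cases (y i) with g0 | g1
            · exact absurd (h0.trans g0.symm) hne
            · exact g1
          refine ⟨h0, ?_, ?_⟩
          · intro j
            rcases eq_or_ne j i with rfl | hj
            · rw [Function.update_self, hy1]
            · rw [Function.update_of_ne hj]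
              exact h.1 j
          · rw [dd]
            rw [show (univ.filter fun j => Function.update x i 1 j ≠ y j)
                = (univ.filter fun j => x j ≠ y j).erase i from ?_]
            · rw [Finset.card_erase_of_mem (by simp [hne])]
              have h2 : (univ.filter fun j => x j ≠ y j).card = m + 1 := h.2
              omega
            · ext j
              rcases eq_or_ne j i with rfl | hj
              · simp [Function.update_self, hy1]
              · simp [Function.update_of_ne hj, hj]
      rw [hset]
      rw [show (univ.filter fun i => x i ≠ y i).card = m + 1 from h.2]
      push_cast
      try ring_nf
    · rw [if_neg h]
      have hset : ((univ.filter fun i => x i = 0).filter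
            (fun i => leF (Function.update x i 1) y ∧ dd (Function.update x i 1) y = m))
          = (∅ : Finset (Fin N)) := by
        rw [Finset.eq_empty_iff_forall_notMem]
        intro i hi
        simp only [Finset.mem_filter, mem_univ, true_and] at hi
        obtain ⟨h0, hle, hdd⟩ := hi
        have h1 := hle i
        rw [Function.update_self] at h1
        have hy1 : y i = 1 := le_antisymm (fin2_le_one _) h1
        apply h
        constructor
        · intro j
          rcases eq_or_ne j i with rfl | hj
          · rw [h0]; exact fin2_zero_le _
          · have := hle j
            rwa [Function.update_of_ne hj] at this
        · rw [dd]
          rw [show (univ.filter fun j => x j ≠ y j)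
              = insert i (univ.filter fun j => Function.update x i 1 j ≠ y j) from ?_]
          · rw [Finset.card_insert_of_notMem (by simp [Function.update_self, hy1])]
            have h2 : (univ.filter fun j => Function.update x i 1 j ≠ y j).card = m := hdd
            omega
          · ext j
            rcases eq_or_ne j i with rfl | hj
            · simp [Function.update_self, hy1, h0, fin2_zero_ne_one]
            · simp [Function.update_of_ne hj, hj]
      rw [hset]
      simp
  rw [Finset.sum_congr rfl (fun y _ => count y), ← Finset.sum_filter, Em_apply, Finset.mul_sum]

lemma Em_eq_zero {v : TP N} (hE : Eop N v = 0) : ∀ m : ℕ, Em N (m+1) v = 0 := by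
  intro m
  induction m with
  | zero =>
    funext x
    rw [Em_one, hE]
  | succ m ih =>
    funext x
    have h := Eop_Em (m+1) v x
    rw [ih] at h
    rw [map_zero] at h
    have h0 : (0 : TP N) x = 0 := rfl
    rw [h0] at h
    have hne : ((m+1 : ℕ) : ℂ) + 1 ≠ 0 := by
      have he : ((m+1 : ℕ) : ℂ) + 1 = ((m+2 : ℕ) : ℂ) := by push_cast; ring
      rw [he]
      exact Nat.cast_ne_zero.mpr (Nat.succ_ne_zero _)
    have := (mul_eq_zero.mp h.symm).resolve_left hne
    exact this


/-! ### Dimension of the weight spaces -/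

def levelEquiv (N ℓ : ℕ) :
    {x : Fin N → Fin 2 // ones x = ℓ} ≃ {s : Finset (Fin N) // s.card = ℓ} where
  toFun x := ⟨univ.filter (fun i => x.1 i = 1), x.2⟩
  invFun s := ⟨fun i => if i ∈ s.1 then 1 else 0, by
    have h : (univ.filter fun i => (if i ∈ s.1 then (1:Fin 2) else 0) = 1) = s.1 := by
      ext i
      by_cases hi : i ∈ s.1 <;> simp [hi, fin2_zero_ne_one]
    rw [ones, h]
    exact s.2⟩
  left_inv x := by
    apply Subtype.ext
    funext i
    by_cases hi : x.1 i = 1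
    · simp [hi]
    · simp [hi, fin2_ne_one hi]
  right_inv s := by
    apply Subtype.ext
    ext i
    by_cases hi : i ∈ s.1 <;> simp [hi, fin2_zero_ne_one]

lemma card_level (N ℓ : ℕ) :
    Fintype.card {x : Fin N → Fin 2 // ones x = ℓ} = N.choose ℓ := by
  rw [Fintype.card_congr (levelEquiv N ℓ), Fintype.card_finset_len, Fintype.card_fin]

noncomputable def WEquiv (N ℓ : ℕ) :
    (W N ℓ) ≃ₗ[ℂ] ({x : Fin N → Fin 2 // ones x = ℓ} → ℂ) where
  toFun v := fun p => v.1 p.1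
  map_add' v w := rfl
  map_smul' c v := rfl
  invFun f := ⟨fun x => if h : ones x = ℓ then f ⟨x, h⟩ else 0, by
    intro x hx
    exact dif_neg hx⟩
  left_inv v := by
    apply Subtype.ext
    funext x
    by_cases h : ones x = ℓ
    · simp [h]
    · simp [h, v.2 x h]
  right_inv f := by
    funext p
    simp [p.2]

lemma finrank_W (N ℓ : ℕ) : Module.finrank ℂ (W N ℓ) = N.choose ℓ := by
  rw [(WEquiv N ℓ).finrank_eq, Module.finrank_fintype_fun_eq_card, card_level]

/-! ### The matrix-level action -/

noncomputable def P (N : ℕ) (M : Matrix (Fin 2) (Fin 2) ℂ) : TP N →ₗ[ℂ] TP N :=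
  Matrix.toLin' (kronPow N M)

lemma kronPow_mul (N : ℕ) (A B : Matrix (Fin 2) (Fin 2) ℂ) :
    kronPow N (A * B) = kronPow N A * kronPow N B := by
  ext x y
  simp only [kronPow, Matrix.of_apply, Matrix.mul_apply]
  rw [Finset.prod_univ_sum, Fintype.piFinset_univ]
  exact Finset.sum_congr rfl fun z _ => Finset.prod_mul_distrib

lemma P_mul (N : ℕ) (A B : Matrix (Fin 2) (Fin 2) ℂ) (v : TP N) :
    P N (A * B) v = P N A (P N B v) := by
  rw [P, kronPow_mul, Matrix.toLin'_mul]
  rfl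

lemma P_apply (N : ℕ) (M : Matrix (Fin 2) (Fin 2) ℂ) (v : TP N) (x : Fin N → Fin 2) :
    P N M v x = ∑ y, (∏ i, M (x i) (y i)) * v y := by
  simp [P, Matrix.toLin'_apply, Matrix.mulVec, dotProduct, kronPow]

lemma sl2Rep_eq_P (g : SL2) (v : TP N) :
    sl2Rep N g v = P N (g : Matrix (Fin 2) (Fin 2) ℂ) v := rfl

def uMat (t : ℂ) : Matrix (Fin 2) (Fin 2) ℂ := !![1, t; 0, 1]
def dMat (a d : ℂ) : Matrix (Fin 2) (Fin 2) ℂ := !![a, 0; 0, d]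
def sMat : Matrix (Fin 2) (Fin 2) ℂ := !![0, 1; 1, 0]

lemma uMat_00 (t : ℂ) : uMat t 0 0 = 1 := rfl
lemma uMat_01 (t : ℂ) : uMat t 0 1 = t := rfl
lemma uMat_10 (t : ℂ) : uMat t 1 0 = 0 := rfl
lemma uMat_11 (t : ℂ) : uMat t 1 1 = 1 := rfl

lemma prod_uMat (t : ℂ) (x y : Fin N → Fin 2) :
    (∏ i, uMat t (x i) (y i)) = if leF x y then t ^ dd x y else 0 := by
  by_cases h : leF x y
  · rw [if_pos h]
    have hfac : ∀ i, uMat t (x i) (y i) = if x i ≠ y i then t else 1 := by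
      intro i
      rcases fin2_cases (x i) with h0 | h1
      · rcases fin2_cases (y i) with g0 | g1
        · rw [h0, g0, uMat_00, if_neg (by simp)]
        · rw [h0, g1, uMat_01, if_pos fin2_zero_ne_one]
      · have g1 : y i = 1 := le_antisymm (fin2_le_one _) (by rw [← h1]; exact h i)
        rw [h1, g1, uMat_11, if_neg (by simp)]
    rw [Finset.prod_congr rfl (fun i _ => hfac i), Finset.prod_ite, Finset.prod_const,
      Finset.prod_const, one_pow, mul_one]
    rfl
  · rw [if_neg h]
    rw [leF] at h
    push_neg at h
    obtain ⟨i, hi⟩ := h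
    rw [Fin.lt_def] at hi
    have h1 : x i = 1 := by
      apply Fin.ext
      rw [Fin.val_one]
      have := (x i).isLt
      have := (y i).isLt
      omega
    have h0 : y i = 0 := by
      apply Fin.ext
      rw [Fin.val_zero]
      have := (x i).isLt
      have := (y i).isLt
      omega
    apply Finset.prod_eq_zero (Finset.mem_univ i)
    rw [h1, h0, uMat_10]

lemma P_uMat (t : ℂ) (v : TP N) (x : Fin N → Fin 2) :
    P N (uMat t) v x = ∑ m ∈ Finset.range (N+2), t ^ m * Em N m v x := by
  rw [P_apply]
  have h1 : ∀ y : Fin N → Fin 2, (∏ i, uMat t (x i) (y i)) * v y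
      = if leF x y then t ^ dd x y * v y else 0 := by
    intro y
    rw [prod_uMat]
    split <;> simp
  rw [Finset.sum_congr rfl (fun y _ => h1 y)]
  rw [← Finset.sum_filter]
  rw [← Finset.sum_fiberwise_of_maps_to
    (fun y _ => Finset.mem_range.mpr (Nat.lt_succ_of_le (le_trans (dd_le x y) (Nat.le_succ N))))
    (fun y => t ^ dd x y * v y)]
  refine Finset.sum_congr rfl fun m _ => ?_
  rw [Em_apply, Finset.mul_sum, Finset.filter_filter]
  apply Finset.sum_congr rfl
  intro y hy
  rw [mem_filter] at hy
  rw [hy.2.2]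

lemma P_uMat_eq_self {v : TP N} (hE : Eop N v = 0) (t : ℂ) : P N (uMat t) v = v := by
  funext x
  rw [P_uMat]
  rw [Finset.sum_eq_single 0]
  · rw [pow_zero, one_mul, Em_zero]
  · intro m hm hm0
    obtain ⟨m', rfl⟩ : ∃ m', m = m' + 1 := ⟨m - 1, by omega⟩
    rw [Em_eq_zero hE m']
    simp
  · intro hnot
    exact absurd (Finset.mem_range.mpr (by omega)) hnot

lemma Eop_eq_zero_of_inv {v : TP N} (h : ∀ t : ℂ, P N (uMat t) v = v) : Eop N v = 0 := by
  funext x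
  have key : ∀ t : ℂ,
      Polynomial.eval t (∑ m ∈ Finset.range (N+2), Polynomial.C (Em N m v x) * Polynomial.X ^ m)
        = Polynomial.eval t (Polynomial.C (v x)) := by
    intro t
    rw [Polynomial.eval_C, Polynomial.eval_finset_sum]
    simp only [Polynomial.eval_mul, Polynomial.eval_C, Polynomial.eval_pow, Polynomial.eval_X]
    have hx := congrFun (h t) x
    rw [P_uMat] at hx
    rw [← hx]
    exact Finset.sum_congr rfl fun m _ => mul_comm _ _
  have hpq := Polynomial.funext key
  have hc := congrArg (fun p => Polynomial.coeff p 1) hpq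
  simp only [Polynomial.finset_sum_coeff, Polynomial.coeff_C_mul, Polynomial.coeff_X_pow,
    Polynomial.coeff_C] at hc
  rw [Finset.sum_eq_single 1] at hc
  · simp at hc
    have hEx : Eop N v x = 0 := by rw [← Em_one v x]; exact hc
    exact hEx
  · intro m _ hm
    rw [if_neg (fun hh => hm hh.symm), mul_zero]
  · intro hnot
    exact absurd (Finset.mem_range.mpr (by omega)) hnot

lemma P_dMat (a d : ℂ) (v : TP N) (x : Fin N → Fin 2) :
    P N (dMat a d) v x = a ^ zeros x * d ^ ones x * v x := by
  rw [P_apply, Finset.sum_eq_single x]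
  · congr 1
    have hfac : ∀ i, dMat a d (x i) (x i) = if x i = 0 then a else d := by
      intro i
      rcases fin2_cases (x i) with h | h
      · rw [h, if_pos rfl]; rfl
      · rw [h, if_neg fin2_one_ne_zero]; rfl
    rw [Finset.prod_congr rfl (fun i _ => hfac i), Finset.prod_ite, Finset.prod_const,
      Finset.prod_const, filter_ne_zero_eq]
    rfl
  · intro y _ hy
    obtain ⟨i, hi⟩ := Function.ne_iff.mp hy
    apply mul_eq_zero_of_left
    apply Finset.prod_eq_zero (Finset.mem_univ i)
    rcases fin2_cases (x i) with h | h <;> rcases fin2_cases (y i) with g | g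
    · exact absurd (h.trans g.symm) (Ne.symm hi)
    · rw [h, g]; rfl
    · rw [h, g]; rfl
    · exact absurd (h.trans g.symm) (Ne.symm hi)
  · intro hnot
    exact absurd (Finset.mem_univ x) hnot

lemma P_dMat_eq_self {v : TP N} {ℓ : ℕ} (hv : v ∈ W N ℓ) (hN : N = 2 * ℓ)
    {a d : ℂ} (had : a * d = 1) : P N (dMat a d) v = v := by
  funext x
  rw [P_dMat]
  by_cases h : ones x = ℓ
  · have hz : zeros x = ℓ := by have := zeros_add_ones x; omega
    rw [hz, h, ← mul_pow, had, one_pow, one_mul]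
  · rw [hv x h, mul_zero]

lemma mem_W_of_inv {v : TP N} {ℓ : ℕ} (hN : N = 2 * ℓ)
    (h : P N (dMat 2 2⁻¹) v = v) : v ∈ W N ℓ := by
  intro x hx
  have h2 := congrFun h x
  rw [P_dMat] at h2
  by_contra hvx
  rcases mul_left_eq_self₀.mp h2 with hc | h0
  · have hzo : zeros x ≠ ones x := by
      have := zeros_add_ones x
      omega
    apply hzo
    have hpow : (2:ℂ) ^ zeros x = 2 ^ ones x := by
      have h2o : ((2:ℂ) ^ ones x) ≠ 0 := pow_ne_zero _ two_ne_zero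
      rw [inv_pow] at hc
      exact (mul_inv_eq_one₀ h2o).mp hc
    have : ((2 ^ zeros x : ℕ) : ℂ) = ((2 ^ ones x : ℕ) : ℂ) := by push_cast; exact hpow
    have hnat : (2:ℕ) ^ zeros x = 2 ^ ones x := Nat.cast_injective this
    exact Nat.pow_right_injective (le_refl 2) hnat
  · exact hvx h0

/-! ### The flip symmetry -/

def neg2 : Fin 2 → Fin 2 := fun a => if a = 0 then 1 else 0

lemma neg2_zero : neg2 0 = 1 := rfl
lemma neg2_one : neg2 1 = 0 := if_neg fin2_one_ne_zero

lemma neg2_neg2 (a : Fin 2) : neg2 (neg2 a) = a := by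
  rcases fin2_cases a with h | h <;> rw [h]
  · rw [neg2_zero, neg2_one]
  · rw [neg2_one, neg2_zero]

noncomputable def Flip (N : ℕ) : TP N →ₗ[ℂ] TP N where
  toFun v := fun x => v (fun i => neg2 (x i))
  map_add' v w := rfl
  map_smul' c v := rfl

lemma Flip_apply (v : TP N) (x : Fin N → Fin 2) : Flip N v x = v (fun i => neg2 (x i)) := rfl

lemma Flip_Flip (v : TP N) : Flip N (Flip N v) = v := by
  funext x
  rw [Flip_apply, Flip_apply]
  congr 1
  funext i
  exact neg2_neg2 (x i)

lemma P_sMat (v : TP N) : P N sMat v = Flip N v := by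
  funext x
  rw [P_apply, Finset.sum_eq_single (fun i => neg2 (x i))]
  · rw [show (∏ i, sMat (x i) (neg2 (x i))) = 1 from ?_, one_mul, Flip_apply]
    apply Finset.prod_eq_one
    intro i _
    rcases fin2_cases (x i) with h | h <;> rw [h]
    · rw [neg2_zero]; rfl
    · rw [neg2_one]; rfl
  · intro y _ hy
    obtain ⟨i, hi⟩ := Function.ne_iff.mp hy
    apply mul_eq_zero_of_left
    apply Finset.prod_eq_zero (Finset.mem_univ i)
    rcases fin2_cases (x i) with h | h <;> rcases fin2_cases (y i) with g | g
    · rw [h, g]; rfl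
    · exact absurd (by rw [g, h, neg2_zero]) hi
    · exact absurd (by rw [g, h, neg2_one]) hi
    · rw [h, g]; rfl
  · intro hnot
    exact absurd (Finset.mem_univ _) hnot

lemma Eop_Flip (v : TP N) : Eop N (Flip N v) = Flip N (Fop N v) := by
  funext x
  rw [Eop_apply, Flip_apply, Fop_apply]
  rw [show (univ.filter fun i => x i = 0) = (univ.filter fun i => neg2 (x i) = 1) from ?_]
  · apply Finset.sum_congr rfl
    intro i hi
    rw [mem_filter] at hi
    rw [Flip_apply]
    congr 1
    funext j
    rcases eq_or_ne j i with rfl | hj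
    · rw [Function.update_self, Function.update_self, neg2_one]
    · rw [Function.update_of_ne hj, Function.update_of_ne hj]
  · ext i
    simp only [mem_filter, mem_univ, true_and]
    rcases fin2_cases (x i) with h | h <;> rw [h]
    · rw [neg2_zero]
      simp
    · rw [neg2_one]
      simp [fin2_one_ne_zero, fin2_zero_ne_one]


/-! ### SL(2) elements and decomposition -/

lemma det_uMat (t : ℂ) : (uMat t).det = 1 := by
  rw [uMat, Matrix.det_fin_two_of]; ring

noncomputable def uSL (t : ℂ) : SL2 := ⟨uMat t, det_uMat t⟩

noncomputable def dSL : SL2 := ⟨dMat 2 2⁻¹, by rw [dMat, Matrix.det_fin_two_of]; norm_num⟩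

lemma SL2_decomp (g : SL2) (v : TP N) {ℓ : ℕ} (hv : v ∈ W N ℓ) (hN : N = 2 * ℓ)
    (hE : Eop N v = 0) (hF : Fop N v = 0) :
    P N (g : Matrix (Fin 2) (Fin 2) ℂ) v = v := by
  set M : Matrix (Fin 2) (Fin 2) ℂ := (g : Matrix (Fin 2) (Fin 2) ℂ) with hMdef
  have hdet : M.det = 1 := g.2
  rw [Matrix.det_fin_two] at hdet
  have hU : ∀ t, P N (uMat t) v = v := P_uMat_eq_self hE
  have hFlip : ∀ t, P N (uMat t) (Flip N v) = Flip N v := by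
    intro t
    apply P_uMat_eq_self
    rw [Eop_Flip, hF, map_zero]
  by_cases hc : M 1 0 = 0
  · have had : M 0 0 * M 1 1 = 1 := by
      rw [hc, mul_zero, sub_zero] at hdet
      exact hdet
    have hMeq : M = uMat (M 0 0 * M 0 1) * dMat (M 0 0) (M 1 1) := by
      ext i j
      fin_cases i <;> fin_cases j
      · simp [uMat, dMat, Matrix.mul_apply, Fin.sum_univ_two]
      · simp [uMat, dMat, Matrix.mul_apply, Fin.sum_univ_two]
        linear_combination (-(M 0 1)) * had
      · simp [uMat, dMat, Matrix.mul_apply, Fin.sum_univ_two, hc]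
      · simp [uMat, dMat, Matrix.mul_apply, Fin.sum_univ_two]
    rw [hMeq, P_mul, P_dMat_eq_self hv hN had]
    exact hU _
  · have hMeq : M = uMat ((M 0 0 - 1) / M 1 0)
        * (sMat * (uMat (M 1 0) * (sMat * uMat ((M 1 1 - 1) / M 1 0)))) := by
      ext i j
      fin_cases i <;> fin_cases j
      · simp [uMat, sMat, Matrix.mul_apply, Fin.sum_univ_two]
        field_simp
        ring
      · simp [uMat, sMat, Matrix.mul_apply, Fin.sum_univ_two]
        field_simp
        linear_combination -hdet
      · simp [uMat, sMat, Matrix.mul_apply, Fin.sum_univ_two]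
      · simp [uMat, sMat, Matrix.mul_apply, Fin.sum_univ_two]
        field_simp
        ring
    calc P N M v
        = P N (uMat ((M 0 0 - 1) / M 1 0)) (P N sMat (P N (uMat (M 1 0))
            (P N sMat (P N (uMat ((M 1 1 - 1) / M 1 0)) v)))) := by
          conv_lhs => rw [hMeq, P_mul, P_mul, P_mul, P_mul]
      _ = v := by
          rw [hU ((M 1 1 - 1) / M 1 0), P_sMat v, hFlip (M 1 0), P_sMat (Flip N v),
            Flip_Flip, hU ((M 0 0 - 1) / M 1 0)]

lemma invariants_eq (k : ℕ) :
    repInvariants (sl2Rep (2 * k)) = W (2 * k) k ⊓ LinearMap.ker (Eop (2 * k)) := by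
  apply le_antisymm
  · intro v hv
    have hv' : ∀ g : SL2, sl2Rep (2 * k) g v = v := hv
    have hu : ∀ t : ℂ, P (2 * k) (uMat t) v = v := fun t => hv' (uSL t)
    have hd : P (2 * k) (dMat 2 2⁻¹) v = v := hv' dSL
    exact Submodule.mem_inf.mpr
      ⟨mem_W_of_inv rfl hd, LinearMap.mem_ker.mpr (Eop_eq_zero_of_inv hu)⟩
  · intro v hv
    rw [Submodule.mem_inf] at hv
    obtain ⟨hW, hK⟩ := hv
    have hE : Eop (2 * k) v = 0 := LinearMap.mem_ker.mp hK
    have hF : Fop (2 * k) v = 0 := Fop_eq_zero hW rfl hE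
    show ∀ g : SL2, sl2Rep (2 * k) g v = v
    intro g
    rw [sl2Rep_eq_P]
    exact SL2_decomp g v hW rfl hE hF

lemma catalan_arith (j : ℕ) :
    catalan (j+1) + (2*(j+1)).choose j = (2*(j+1)).choose (j+1) := by
  have h1 : (j + 2) * catalan (j + 1) = (2*(j+1)).choose (j+1) :=
    succ_mul_catalan_eq_centralBinom (j+1)
  have h2 := Nat.choose_succ_right_eq (2*(j+1)) j
  rw [show 2*(j+1) - j = j + 2 from by omega] at h2
  apply Nat.eq_of_mul_eq_mul_left (show 0 < j + 2 from by omega)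
  rw [Nat.mul_add, h1, Nat.mul_comm (j+2) ((2*(j+1)).choose j), ← h2]
  ring

end CatalanAux

open CatalanAux

theorem finrank_invariants_eq_catalan (k : ℕ) :
    Module.finrank ℂ (repInvariants (sl2Rep (2 * k))) = catalan k ∧
      (k + 1) * Module.finrank ℂ (repInvariants (sl2Rep (2 * k))) = Nat.choose (2 * k) k := by
  have h1 : Module.finrank ℂ (repInvariants (sl2Rep (2 * k))) = catalan k := by
    rw [invariants_eq k]
    rcases k with _ | j
    · -- k = 0
      have hW : W (2 * 0) 0 = ⊤ := by
        rw [eq_top_iff]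
        intro v _ x hx
        exfalso
        apply hx
        have := zeros_add_ones x
        omega
      have hEker : LinearMap.ker (Eop (2 * 0)) = ⊤ := by
        rw [LinearMap.ker_eq_top]
        apply LinearMap.ext
        intro v
        funext x
        rw [Eop_apply]
        apply Finset.sum_eq_zero
        intro i _
        exact absurd i.isLt (by omega)
      rw [hW, hEker, inf_top_eq, finrank_top, Module.finrank_fintype_fun_eq_card]
      rw [Fintype.card_fun]
      simp [catalan_zero]
    · -- k = j+1
      set N := 2 * (j + 1) with hNdef
      set φ : (W N (j+1)) →ₗ[ℂ] TP N := (Eop N).comp (W N (j+1)).subtype with hφ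
      have hrange : LinearMap.range φ = W N j := by
        rw [hφ, LinearMap.range_comp, Submodule.range_subtype]
        exact map_Eop_W j (by ring)
      have hkerrank : Module.finrank ℂ (LinearMap.ker φ)
          = Module.finrank ℂ
              (W N (j+1) ⊓ LinearMap.ker (Eop N) : Submodule ℂ (TP N)) := by
        refine LinearEquiv.finrank_eq ?_
        exact
          { toFun := fun w => ⟨w.1.1,
              Submodule.mem_inf.mpr ⟨w.1.2, LinearMap.mem_ker.mpr (LinearMap.mem_ker.mp w.2)⟩⟩,
            map_add' := fun _ _ => rfl,
            map_smul' := fun _ _ => rfl,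
            invFun := fun u => ⟨⟨u.1, (Submodule.mem_inf.mp u.2).1⟩,
              LinearMap.mem_ker.mpr (LinearMap.mem_ker.mp (Submodule.mem_inf.mp u.2).2)⟩,
            left_inv := fun _ => rfl,
            right_inv := fun _ => rfl }
      have hrn := LinearMap.finrank_range_add_finrank_ker φ
      rw [hrange, hkerrank, finrank_W, finrank_W] at hrn
      have harith := catalan_arith j
      rw [← hNdef] at harith
      omega
  refine ⟨h1, ?_⟩
  rw [h1]
  exact succ_mul_catalan_eq_centralBinom k
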